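/- arXiv:math/0601600 — 3 statements merged into one kernel-verified Lean document; each statement's English description precedes it below -/
import Mathlib

section
/- Let θ ∈ ℝ, let n ≥ 3 and let p(z) = z^n + e^{iθ} z. Then |p|_0 = d(p), |p|_ζ < d(p) for every zero ζ ≠ 0 of p, and p is linearly inextensible. -/
open Polynomial Complex

/-- The distance `|p|_α` from `α` to the zero set of `p'`. -/
noncomputable def critDist (p : Polynomial ℂ) (α : ℂ) : ℝ :=
  sInf {r : ℝ | ∃ w : ℂ, (Polynomial.derivative p).eval w = 0 ∧ r = dist α w}

/-- `d(p) = max_{z : p(z)=0} min_{w : p'(w)=0} |z - w|`. -/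
noncomputable def sendovD (p : Polynomial ℂ) : ℝ :=
  sSup {r : ℝ | ∃ z : ℂ, p.eval z = 0 ∧ r = critDist p z}

/-- `S_n`: monic complex polynomials of degree `n` with all zeros in the closed unit disk. -/
def Sset (n : ℕ) : Set (Polynomial ℂ) :=
  {p | p.Monic ∧ p.natDegree = n ∧ ∀ z : ℂ, p.eval z = 0 → ‖z‖ ≤ 1}

/-- The distance `Δ(p,q)`: minimum over all matchings (labelings with multiplicity) of the
zeros of `p` and `q` of the largest distance between matched zeros. -/
noncomputable def polyDelta (n : ℕ) (p q : Polynomial ℂ) : ℝ :=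
  sInf {r : ℝ | ∃ z ζ : Fin n → ℂ,
    p = ∏ i, (Polynomial.X - Polynomial.C (z i)) ∧
    q = ∏ i, (Polynomial.X - Polynomial.C (ζ i)) ∧
    r = sSup (Set.range fun i => dist (z i) (ζ i))}

/-- `p ∈ S_n` is linearly inextensible if `∃ ε > 0, C ≥ 0, κ > 0` such that
`d(q) ≤ d(p) + C·Δ(q,p)^{1+κ}` for every `q ∈ S_n` with `Δ(q,p) < ε`. -/
def LinInext (n : ℕ) (p : Polynomial ℂ) : Prop :=
  ∃ ε > (0 : ℝ), ∃ C : ℝ, 0 ≤ C ∧ ∃ κ : ℝ, 0 < κ ∧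
    ∀ q ∈ Sset n, polyDelta n q p < ε →
      sendovD q ≤ sendovD p + C * polyDelta n q p ^ ((1 : ℝ) + κ)


set_option maxHeartbeats 1000000

lemma aux_exists_fin_prod (n : ℕ) (q : ℂ[X]) (hm : q.Monic) (hd : q.natDegree = n) :
    ∃ z : Fin n → ℂ, q = ∏ i, (X - C (z i)) := by
  have hsp : q.Splits := IsAlgClosed.splits q
  have hq := hsp.eq_prod_roots_of_monic hm
  have hcard : Multiset.card q.roots = n := by
    rw [← hd]; exact (splits_iff_card_roots.mp hsp)
  set l := q.roots.toList with hl
  have hlen : l.length = n := by rw [hl, Multiset.length_toList, hcard]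
  refine ⟨fun i => l.get (Fin.cast hlen.symm i), ?_⟩
  have h1 : q.roots = (l : Multiset ℂ) := (Multiset.coe_toList _).symm
  rw [h1] at hq
  have h2 : (Multiset.map (fun a => X - C a) (l : Multiset ℂ)).prod
      = (l.map (fun a => X - C a)).prod := by
    rw [Multiset.map_coe, Multiset.prod_coe]
  rw [hq, h2]
  have h3 : l.map (fun a => X - C a) = List.ofFn ((fun a => X - C a) ∘ l.get) := by
    rw [← List.map_ofFn, List.ofFn_get]
  rw [h3, List.prod_ofFn]
  exact (Equiv.prod_comp (finCongr hlen.symm) fun j => X - C (l.get j)).symm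

lemma aux_pow_card_le_prod (s : Multiset ℝ) (a : ℝ) (ha : 0 ≤ a) (h : ∀ x ∈ s, a ≤ x) :
    a ^ Multiset.card s ≤ s.prod := by
  induction s using Multiset.induction with
  | empty => simp
  | cons x s ih =>
    have hx := h x (Multiset.mem_cons_self x s)
    simp only [Multiset.card_cons, Multiset.prod_cons, pow_succ]
    rw [mul_comm]
    exact mul_le_mul hx (ih fun y hy => h y (Multiset.mem_cons_of_mem hy))
      (pow_nonneg ha _) (ha.trans hx)

lemma aux_prod_sub_prod {ι : Type*} [DecidableEq ι] (t : Finset ι) (f g : ι → ℂ) (M : ℝ)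
    (hM : 1 ≤ M) (hf : ∀ i ∈ t, ‖f i‖ ≤ M) (hg : ∀ i ∈ t, ‖g i‖ ≤ M) :
    ‖∏ i ∈ t, f i - ∏ i ∈ t, g i‖
      ≤ (∑ i ∈ t, ‖f i - g i‖) * M ^ t.card := by
  induction t using Finset.induction with
  | empty => simp
  | insert c t hc ih =>
    have hfc := hf c (Finset.mem_insert_self c t)
    have hgc := hg c (Finset.mem_insert_self c t)
    have hf' : ∀ i ∈ t, ‖f i‖ ≤ M := fun i hi => hf i (Finset.mem_insert_of_mem hi)
    have hg' : ∀ i ∈ t, ‖g i‖ ≤ M := fun i hi => hg i (Finset.mem_insert_of_mem hi)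
    rw [Finset.prod_insert hc, Finset.prod_insert hc, Finset.sum_insert hc,
      Finset.card_insert_of_notMem hc]
    have key : f c * ∏ i ∈ t, f i - g c * ∏ i ∈ t, g i
        = f c * (∏ i ∈ t, f i - ∏ i ∈ t, g i) + (f c - g c) * ∏ i ∈ t, g i := by ring
    rw [key]
    have hPg : ‖∏ i ∈ t, g i‖ ≤ M ^ t.card := by
      rw [norm_prod]
      calc ∏ i ∈ t, ‖g i‖ ≤ ∏ i ∈ t, M :=
        Finset.prod_le_prod (fun i _ => norm_nonneg _) hg'
      _ = M ^ t.card := by rw [Finset.prod_const]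
    have hd : (0:ℝ) ≤ ‖f c - g c‖ := norm_nonneg _
    have hS : (0:ℝ) ≤ ∑ i ∈ t, ‖f i - g i‖ :=
      Finset.sum_nonneg fun i _ => norm_nonneg _
    have hk : (0:ℝ) ≤ M ^ t.card := pow_nonneg (by linarith) _
    calc ‖f c * (∏ i ∈ t, f i - ∏ i ∈ t, g i) + (f c - g c) * ∏ i ∈ t, g i‖
        ≤ ‖f c‖ * ‖∏ i ∈ t, f i - ∏ i ∈ t, g i‖
          + ‖f c - g c‖ * ‖∏ i ∈ t, g i‖ := by
          refine (norm_add_le _ _).trans ?_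
          rw [norm_mul, norm_mul]
      _ ≤ M * ((∑ i ∈ t, ‖f i - g i‖) * M ^ t.card)
          + ‖f c - g c‖ * M ^ t.card := by
          refine add_le_add (mul_le_mul hfc (ih hf' hg') (norm_nonneg _) (by linarith)) ?_
          exact mul_le_mul_of_nonneg_left hPg hd
      _ ≤ (‖f c - g c‖ + ∑ i ∈ t, ‖f i - g i‖) * M ^ (t.card + 1) := by
          rw [pow_succ]
          nlinarith [mul_nonneg (mul_nonneg hd hk) (by linarith : (0:ℝ) ≤ M - 1)]

lemma aux_deriv_facts (n : ℕ) (hn : 3 ≤ n) (q : ℂ[X]) (hm : q.Monic) (hd : q.natDegree = n) :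
    (derivative q).natDegree = n - 1 ∧ (derivative q).leadingCoeff = (n : ℂ) := by
  have h1 : n - 1 + 1 = n := by omega
  have hco : (derivative q).coeff (n - 1) = (n : ℂ) := by
    rw [coeff_derivative, h1]
    have : q.coeff n = 1 := by rw [← hd]; exact hm.coeff_natDegree
    rw [this, one_mul]
    rw [Nat.cast_sub (show 1 ≤ n by omega)]
    push_cast; ring
  have hne : (derivative q).coeff (n - 1) ≠ 0 := by
    rw [hco]; exact_mod_cast Nat.cast_ne_zero.mpr (by omega)
  have hle : (derivative q).natDegree ≤ n - 1 := by
    have := natDegree_derivative_le q; rw [hd] at this; exact this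
  have hdeg : (derivative q).natDegree = n - 1 :=
    le_antisymm hle (le_natDegree_of_ne_zero hne)
  exact ⟨hdeg, by rw [Polynomial.leadingCoeff, hdeg, hco]⟩

lemma aux_exists_crit_near (n : ℕ) (hn : 3 ≤ n) (q : ℂ[X]) (hm : q.Monic) (hd : q.natDegree = n)
    (x : ℂ) (B : ℝ) (hB : 0 ≤ B)
    (h : ‖(derivative q).eval x‖ ≤ n * B ^ (n - 1)) :
    ∃ w : ℂ, (derivative q).eval w = 0 ∧ dist x w ≤ B := by
  obtain ⟨hdeg, hlc⟩ := aux_deriv_facts n hn q hm hd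
  have hq'ne : derivative q ≠ 0 := by
    intro h0; rw [h0, leadingCoeff_zero] at hlc
    exact (Nat.cast_ne_zero.mpr (show n ≠ 0 by omega)) hlc.symm
  have hsp : (derivative q).Splits := IsAlgClosed.splits _
  have hcard : Multiset.card (derivative q).roots = n - 1 := by
    rw [← hdeg]; exact splits_iff_card_roots.mp hsp
  have hfac := hsp.eq_prod_roots
  -- evaluate
  have heval : ∀ y : ℂ, ‖(derivative q).eval y‖
      = (n : ℝ) * (((derivative q).roots.map fun w => ‖y - w‖).prod) := by
    intro y
    conv_lhs => rw [hfac]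
    rw [eval_mul, eval_C, hlc, norm_mul, eval_multiset_prod, Multiset.map_map]
    rw [Complex.norm_natCast]
    rw [show ∀ m : Multiset ℂ, ‖m.prod‖ = (m.map norm).prod from fun m => map_multiset_prod (normHom.toMonoidHom : ℂ →* ℝ) m, Multiset.map_map]
    congr 1
    refine congrArg Multiset.prod (Multiset.map_congr rfl fun w _ => ?_)
    simp [Function.comp_apply]
  -- roots nonempty
  have hpos : 0 < Multiset.card (derivative q).roots := by rw [hcard]; omega
  have hne2 : (derivative q).roots.toFinset.Nonempty := by
    obtain ⟨w, hw⟩ := Multiset.card_pos_iff_exists_mem.mp hpos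
    exact ⟨w, Multiset.mem_toFinset.mpr hw⟩
  obtain ⟨w₀, hw₀mem, hw₀min⟩ :=
    Finset.exists_min_image (derivative q).roots.toFinset (fun w => ‖x - w‖) hne2
  set m := ‖x - w₀‖ with hmdef
  have hm0 : 0 ≤ m := norm_nonneg _
  have hminprod : m ^ (n - 1) ≤ (((derivative q).roots.map fun w => ‖x - w‖).prod) := by
    have := aux_pow_card_le_prod ((derivative q).roots.map fun w => ‖x - w‖) m hm0 ?_
    · rwa [Multiset.card_map, hcard] at this
    · intro y hy
      obtain ⟨w, hw, rfl⟩ := Multiset.mem_map.mp hy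
      exact hw₀min w (Multiset.mem_toFinset.mpr hw)
  have hkey : m ^ (n - 1) ≤ B ^ (n - 1) := by
    have h2 := (heval x) ▸ h
    have hn0 : (0:ℝ) < n := by positivity
    nlinarith [hminprod]
  have hmB : m ≤ B := by
    have hne3 : n - 1 ≠ 0 := by omega
    exact (pow_le_pow_iff_left₀ hm0 hB hne3).mp hkey
  refine ⟨w₀, ?_, by rwa [Complex.dist_eq]⟩
  have : w₀ ∈ (derivative q).roots := Multiset.mem_toFinset.mp hw₀mem
  exact (mem_roots hq'ne).mp this

lemma critDist_bddBelow (p : Polynomial ℂ) (α : ℂ) :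
    BddBelow {r : ℝ | ∃ w : ℂ, (Polynomial.derivative p).eval w = 0 ∧ r = dist α w} :=
  ⟨0, fun r ⟨w, _, hr⟩ => hr ▸ dist_nonneg⟩

lemma critDist_le (p : Polynomial ℂ) (α w : ℂ) (hw : (Polynomial.derivative p).eval w = 0) :
    critDist p α ≤ dist α w :=
  csInf_le (critDist_bddBelow p α) ⟨w, hw, rfl⟩

-- the radius r
noncomputable def sendR (n : ℕ) : ℝ := ((n : ℝ))⁻¹ ^ (((n - 1 : ℕ) : ℝ))⁻¹

lemma sendR_pos (n : ℕ) (hn : 3 ≤ n) : 0 < sendR n := by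
  apply Real.rpow_pos_of_pos; positivity

lemma sendR_pow (n : ℕ) (hn : 3 ≤ n) : sendR n ^ (n - 1) = ((n : ℝ))⁻¹ := by
  rw [sendR, ← Real.rpow_natCast (((n:ℝ))⁻¹ ^ (((n - 1 : ℕ) : ℝ))⁻¹) (n-1),
    ← Real.rpow_mul (by positivity)]
  rw [inv_mul_cancel₀ (by exact_mod_cast (show ((n-1:ℕ):ℝ) ≠ 0 by exact_mod_cast (show n-1 ≠ 0 by omega)))]
  exact Real.rpow_one _

lemma sendR_le_one (n : ℕ) (hn : 3 ≤ n) : sendR n ≤ 1 := by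
  apply Real.rpow_le_one (by positivity)
  · rw [inv_le_one_iff₀]; right; exact_mod_cast Nat.one_le_cast.mpr (by omega)
  · positivity

lemma sendR_gt_half (n : ℕ) (hn : 3 ≤ n) : 1 / 2 < sendR n := by
  by_contra hle
  push_neg at hle
  have h2 : n < 2 ^ (n - 1) := by
    clear hle
    induction n with
    | zero => omega
    | succ m ih =>
      rcases Nat.lt_or_ge m 3 with h | h
      · interval_cases m <;> simp_all <;> omega
      · have := ih (by omega)
        have h1 : m + 1 - 1 = (m - 1) + 1 := by omega
        rw [h1, pow_succ]
        have : 1 ≤ 2 ^ (m-1) := Nat.one_le_two_pow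
        omega
  have hr := sendR_pow n hn
  have hpos := sendR_pos n hn
  have hle2 : sendR n ^ (n - 1) ≤ (1/2 : ℝ) ^ (n - 1) :=
    pow_le_pow_left₀ (le_of_lt hpos) hle _
  rw [hr] at hle2
  have h3 : ((n:ℝ)) < 2 ^ (n-1) := by exact_mod_cast h2
  have h4 : (0:ℝ) < (n:ℝ) := by positivity
  rw [div_pow, one_pow] at hle2
  have h5 : (0:ℝ) < 2 ^ (n-1) := by positivity
  rw [inv_le_iff_one_le_mul₀' h4] at hle2
  rw [mul_one_div, le_div_iff₀ h5] at hle2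
  nlinarith

section Pfacts
variable (n : ℕ) (hn : 3 ≤ n) (c : ℂ) (hc : ‖c‖ = 1)

lemma aux_pow_inj {a b : ℝ} (ha : 0 ≤ a) (hb : 0 ≤ b) {k : ℕ} (hk : k ≠ 0)
    (h : a ^ k = b ^ k) : a = b :=
  (pow_left_strictMonoOn₀ hk).injOn ha hb h

lemma P_deriv : derivative (X ^ n + C c * X : ℂ[X]) = C (n : ℂ) * X ^ (n - 1) + C c := by
  rw [derivative_add, derivative_X_pow, derivative_C_mul, derivative_X, mul_one]

lemma P_deriv_eval (w : ℂ) :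
    (derivative (X ^ n + C c * X : ℂ[X])).eval w = n * w ^ (n - 1) + c := by
  rw [P_deriv]; simp

include hn hc in
lemma P_crit_iff (w : ℂ) :
    (derivative (X ^ n + C c * X : ℂ[X])).eval w = 0 ↔ w ^ (n - 1) = -c / n := by
  rw [P_deriv_eval]
  have hn0 : (n : ℂ) ≠ 0 := Nat.cast_ne_zero.mpr (by omega)
  constructor
  · intro h; field_simp; linear_combination h
  · intro h; rw [h]; field_simp; ring

include hn hc in
lemma P_crit_abs (w : ℂ) (hw : (derivative (X ^ n + C c * X : ℂ[X])).eval w = 0) :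
    ‖w‖ = sendR n := by
  rw [P_crit_iff n hn c hc] at hw
  have h1 : ‖w‖ ^ (n - 1) = ((n:ℝ))⁻¹ := by
    rw [← norm_pow, hw, norm_div, norm_neg, hc, Complex.norm_natCast, one_div]
  have h2 : ‖w‖ ^ (n - 1) = sendR n ^ (n - 1) := by rw [h1, sendR_pow n hn]
  exact aux_pow_inj (norm_nonneg _) (le_of_lt (sendR_pos n hn)) (show n - 1 ≠ 0 by omega) h2

include hn hc in
lemma P_crit_exists : ∃ w : ℂ, (derivative (X ^ n + C c * X : ℂ[X])).eval w = 0 := by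
  obtain ⟨w, hw⟩ := IsAlgClosed.exists_pow_nat_eq (k := ℂ) (-c / n) (show 0 < n - 1 by omega)
  exact ⟨w, (P_crit_iff n hn c hc w).mpr hw⟩

include hn hc in
lemma P_critDist_zero : critDist (X ^ n + C c * X : ℂ[X]) 0 = sendR n := by
  have hset : {r : ℝ | ∃ w : ℂ, (derivative (X ^ n + C c * X : ℂ[X])).eval w = 0 ∧ r = dist 0 w}
      = {sendR n} := by
    ext r; constructor
    · rintro ⟨w, hw, rfl⟩
      have := P_crit_abs n hn c hc w hw
      simp only [Set.mem_singleton_iff, dist_zero_left, this]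
    · rintro rfl
      obtain ⟨w, hw⟩ := P_crit_exists n hn c hc
      exact ⟨w, hw, by rw [dist_zero_left, P_crit_abs n hn c hc w hw]⟩
  rw [critDist, hset, csInf_singleton]

include hn hc in
lemma P_root_abs (ζ : ℂ) (hζ : (X ^ n + C c * X : ℂ[X]).eval ζ = 0) (h0 : ζ ≠ 0) :
    ζ ^ (n - 1) = -c ∧ ‖ζ‖ = 1 := by
  have he : ζ ^ n + c * ζ = 0 := by simpa using hζ
  have hzz : ζ ^ n = ζ * ζ ^ (n-1) := by
    rw [← pow_succ']; congr 1; omega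
  have h1 : ζ * (ζ ^ (n-1) + c) = 0 := by
    rw [mul_add, ← hzz]; linear_combination he
  have h2 : ζ ^ (n-1) + c = 0 := by
    rcases mul_eq_zero.mp h1 with h | h
    · exact absurd h h0
    · exact h
  have h3 : ζ ^ (n-1) = -c := by linear_combination h2
  refine ⟨h3, ?_⟩
  have h4 : ‖ζ‖ ^ (n-1) = 1 := by
    rw [← norm_pow, h3, norm_neg, hc]
  have h5 : ‖ζ‖ ^ (n-1) = 1 ^ (n-1) := by rw [h4, one_pow]
  exact aux_pow_inj (norm_nonneg _) zero_le_one (show n - 1 ≠ 0 by omega) h5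

end Pfacts

section P2
variable (n : ℕ) (hn : 3 ≤ n) (c : ℂ) (hc : ‖c‖ = 1)

include hn hc in
lemma P_crit_rzeta (ζ : ℂ) (hζn : ζ ^ (n - 1) = -c) :
    (derivative (X ^ n + C c * X : ℂ[X])).eval (((sendR n : ℝ) : ℂ) * ζ) = 0 := by
  rw [P_crit_iff n hn c hc]
  have h1 : (((sendR n : ℝ) : ℂ)) ^ (n - 1) = ((n : ℂ))⁻¹ := by
    rw [← Complex.ofReal_pow, sendR_pow n hn]
    push_cast; ring
  rw [mul_pow, h1, hζn]
  field_simp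

include hn hc in
lemma P_critDist_root_le (ζ : ℂ) (hζ : (X ^ n + C c * X : ℂ[X]).eval ζ = 0) (h0 : ζ ≠ 0) :
    critDist (X ^ n + C c * X : ℂ[X]) ζ ≤ 1 - sendR n := by
  obtain ⟨hζn, hζabs⟩ := P_root_abs n hn c hc ζ hζ h0
  have hcrit := P_crit_rzeta n hn c hc ζ hζn
  refine (critDist_le _ _ _ hcrit).trans ?_
  rw [Complex.dist_eq]
  have : ζ - ((sendR n : ℝ) : ℂ) * ζ = ((1 - sendR n : ℝ) : ℂ) * ζ := by push_cast; ring
  rw [this, norm_mul, Complex.norm_real, Real.norm_eq_abs, hζabs, mul_one]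
  have h2 : (0:ℝ) ≤ 1 - sendR n := by linarith [sendR_le_one n hn]
  rw [_root_.abs_of_nonneg h2]

include hn hc in
lemma P_eval_zero : (X ^ n + C c * X : ℂ[X]).eval 0 = 0 := by
  simp [zero_pow (show n ≠ 0 by omega)]

include hn hc in
lemma P_sendovD : sendovD (X ^ n + C c * X : ℂ[X]) = sendR n := by
  have hr0 : 0 < sendR n := sendR_pos n hn
  have hmem : sendR n ∈ {r : ℝ | ∃ z : ℂ, (X ^ n + C c * X : ℂ[X]).eval z = 0 ∧
      r = critDist (X ^ n + C c * X : ℂ[X]) z} :=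
    ⟨0, P_eval_zero n hn c hc, (P_critDist_zero n hn c hc).symm⟩
  have hbound : ∀ a ∈ {r : ℝ | ∃ z : ℂ, (X ^ n + C c * X : ℂ[X]).eval z = 0 ∧
      r = critDist (X ^ n + C c * X : ℂ[X]) z}, a ≤ sendR n := by
    rintro a ⟨z, hz, rfl⟩
    by_cases h0 : z = 0
    · subst h0; rw [P_critDist_zero n hn c hc]
    · refine (P_critDist_root_le n hn c hc z hz h0).trans ?_
      linarith [sendR_gt_half n hn]
  exact le_antisymm (Real.sSup_le hbound (le_of_lt hr0)) (le_csSup ⟨sendR n, hbound⟩ hmem)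
end P2

lemma aux_structure (n : ℕ) (hn : 3 ≤ n) (c : ℂ) (hc : ‖c‖ = 1)
    (ζ : Fin n → ℂ) (hP : (X ^ n + C c * X : ℂ[X]) = ∏ i, (X - C (ζ i))) :
    ∃ i₀ : Fin n, ζ i₀ = 0 ∧
      (∀ j, j ≠ i₀ → ζ j ^ (n - 1) = -c ∧ ‖ζ j‖ = 1) ∧
      (∑ j ∈ Finset.univ.erase i₀, ζ j = 0) := by
  have hc0 : c ≠ 0 := by
    intro h; rw [h] at hc; simp at hc
  have hn0 : n ≠ 0 := by omega
  -- find i₀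
  have hev0 : (X ^ n + C c * X : ℂ[X]).eval 0 = 0 := by
    simp [zero_pow hn0]
  have : ∏ i, ((0:ℂ) - ζ i) = 0 := by
    have := hev0
    rw [hP] at this
    simpa [eval_prod] using this
  obtain ⟨i₀, -, hi₀⟩ := Finset.prod_eq_zero_iff.mp this
  have hζi₀ : ζ i₀ = 0 := by linear_combination -hi₀
  refine ⟨i₀, hζi₀, ?_, ?_⟩
  · -- other roots
    intro j hj
    have hroot : (X ^ n + C c * X : ℂ[X]).eval (ζ j) = 0 := by
      rw [hP, eval_prod]
      exact Finset.prod_eq_zero (Finset.mem_univ j) (by simp)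
    have hζj0 : ζ j ≠ 0 := by
      intro h0
      -- then X^2 divides p and coeff 1 = 0, but coeff 1 = c ≠ 0
      have h1 : (X ^ n + C c * X : ℂ[X]).coeff 1 = c := by
        rw [coeff_add, coeff_X_pow, if_neg (by omega), coeff_C_mul, coeff_X_one, mul_one,
          zero_add]
      have hj' : j ∈ Finset.univ.erase i₀ := Finset.mem_erase.mpr ⟨hj, Finset.mem_univ j⟩
      have hsplit : (∏ i, (X - C (ζ i)) : ℂ[X])
          = (X - C (ζ i₀)) * ((X - C (ζ j)) * ∏ i ∈ (Finset.univ.erase i₀).erase j,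
              (X - C (ζ i))) := by
        rw [← Finset.mul_prod_erase Finset.univ _ (Finset.mem_univ i₀),
          ← Finset.mul_prod_erase _ _ hj']
      rw [hζi₀, h0] at hsplit
      simp only [map_zero, sub_zero] at hsplit
      have h2 : (X ^ n + C c * X : ℂ[X]).coeff 1 = 0 := by
        rw [hP, hsplit, coeff_X_mul, mul_coeff_zero, coeff_X_zero, zero_mul]
      rw [h1] at h2
      exact hc0 h2
    -- now root facts
    have he : ζ j ^ n + c * ζ j = 0 := by simpa using hroot
    have hzz : ζ j ^ n = ζ j * ζ j ^ (n-1) := by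
      rw [← pow_succ']; congr 1; omega
    have h2 : ζ j ^ (n-1) + c = 0 := by
      rcases mul_eq_zero.mp (show ζ j * (ζ j ^ (n-1) + c) = 0 by
        rw [mul_add, ← hzz]; linear_combination he) with h | h
      · exact absurd h hζj0
      · exact h
    have h3 : ζ j ^ (n-1) = -c := by linear_combination h2
    refine ⟨h3, ?_⟩
    have h4 : ‖ζ j‖ ^ (n-1) = 1 := by rw [← norm_pow, h3, norm_neg, hc]
    have h5 : ‖ζ j‖ ^ (n-1) = 1 ^ (n-1) := by rw [h4, one_pow]
    exact (pow_left_strictMonoOn₀ (show n - 1 ≠ 0 by omega)).injOn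
      (norm_nonneg _) zero_le_one h5
  · -- sum of other roots is zero
    have hsplit : (∏ i, (X - C (ζ i)) : ℂ[X])
        = (X - C (ζ i₀)) * ∏ i ∈ Finset.univ.erase i₀, (X - C (ζ i)) :=
      (Finset.mul_prod_erase _ _ (Finset.mem_univ i₀)).symm
    rw [hζi₀] at hsplit
    simp only [map_zero, sub_zero] at hsplit
    have hXn : (X ^ n : ℂ[X]) = X * X ^ (n-1) := by
      rw [← pow_succ']; congr 1; omega
    have hprod : (∏ i ∈ Finset.univ.erase i₀, (X - C (ζ i)) : ℂ[X]) = X ^ (n-1) + C c := by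
      apply mul_left_cancel₀ (Polynomial.X_ne_zero (R := ℂ))
      calc (X : ℂ[X]) * ∏ i ∈ Finset.univ.erase i₀, (X - C (ζ i))
          = ∏ i, (X - C (ζ i)) := hsplit.symm
        _ = X ^ n + C c * X := hP.symm
        _ = X * (X ^ (n-1) + C c) := by rw [mul_add, ← hXn]; ring
    have hnext := prod_X_sub_C_nextCoeff (s := Finset.univ.erase i₀) ζ
    rw [hprod] at hnext
    have hdeg : (X ^ (n-1) + C c : ℂ[X]).natDegree = n - 1 :=
      natDegree_X_pow_add_C
    have hnext2 : (X ^ (n-1) + C c : ℂ[X]).nextCoeff = 0 := by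
      rw [nextCoeff_of_natDegree_pos (by omega : 0 < (X ^ (n-1) + C c : ℂ[X]).natDegree)]
      rw [hdeg, coeff_add, coeff_X_pow, if_neg (by omega), coeff_C, if_neg (by omega), add_zero]
    rw [hnext2] at hnext
    linear_combination hnext

lemma aux_deriv_prod_eval (m : ℕ) (z : Fin m → ℂ) (x : ℂ) :
    (derivative (∏ i, (X - C (z i)))).eval x
      = ∑ i, ∏ j ∈ Finset.univ.erase i, (x - z j) := by
  have h : (∏ i, (X - C (z i)) : ℂ[X])
      = (Multiset.map (fun i => X - C (z i)) Finset.univ.val).prod := rfl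
  rw [h, derivative_prod]
  have h2 : ∀ i : Fin m, (Multiset.map (fun i => (X:ℂ[X]) - C (z i))
      (Finset.univ.val.erase i)).prod = ∏ j ∈ Finset.univ.erase i, (X - C (z j)) := by
    intro i; rw [← Finset.erase_val]; rfl
  have h3 : (Multiset.map (fun i => (Multiset.map (fun i => (X:ℂ[X]) - C (z i))
      (Finset.univ.val.erase i)).prod * derivative ((X:ℂ[X]) - C (z i))) Finset.univ.val).sum
      = ∑ i, (∏ j ∈ Finset.univ.erase i, (X - C (z j))) * derivative ((X:ℂ[X]) - C (z i)) := by
    apply congrArg Multiset.sum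
    apply Multiset.map_congr rfl
    intro i _
    rw [h2]
  rw [h3]
  rw [eval_finset_sum]
  apply Finset.sum_congr rfl
  intro i _
  rw [derivative_sub, derivative_X, derivative_C, sub_zero, mul_one, eval_prod]
  apply Finset.prod_congr rfl
  intro j _
  simp

lemma aux_main_bound (n : ℕ) (hn : 3 ≤ n) (c : ℂ) (hc : ‖c‖ = 1)
    (q : ℂ[X]) (hqS : q ∈ Sset n) (z ζ : Fin n → ℂ)
    (hq : q = ∏ i, (X - C (z i)))
    (hP : (X ^ n + C c * X : ℂ[X]) = ∏ i, (X - C (ζ i)))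
    (s : ℝ) (hs : ∀ i, dist (z i) (ζ i) ≤ s) (hs0 : 0 ≤ s)
    (h1 : s ≤ 1/2) (h2 : s ≤ sendR n - 1/2)
    (h3 : ((n:ℝ)^2 * 2^(n-1)) * s / n ≤ (sendR n - 1/2)^(n-1)) :
    sendovD q ≤ sendR n + 6 * s^2 := by
  have hcast : ((n-1:ℕ):ℝ) = (n:ℝ) - 1 := by
    rw [Nat.cast_sub (by omega)]; norm_num
  obtain ⟨hmon, hdeg, habs⟩ := hqS
  obtain ⟨i₀, hζi₀, hroots, hsum⟩ := aux_structure n hn c hc ζ hP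
  set r := sendR n with hrdef
  have hr0 : 0 < r := sendR_pos n hn
  have hr1 : r ≤ 1 := sendR_le_one n hn
  have hrh : 1/2 < r := sendR_gt_half n hn
  have hn1 : (1:ℕ) ≤ n - 1 := by omega
  have hcard : (Finset.univ.erase i₀).card = n - 1 := by
    rw [Finset.card_erase_of_mem (Finset.mem_univ i₀), Finset.card_univ, Fintype.card_fin]
  -- roots of q
  have hzroot : ∀ i, q.eval (z i) = 0 := by
    intro i
    rw [hq, eval_prod]
    exact Finset.prod_eq_zero (Finset.mem_univ i) (by simp)
  have hzabs : ∀ i, ‖z i‖ ≤ 1 := fun i => habs _ (hzroot i)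
  have hζabs : ∀ j, ‖ζ j‖ ≤ 1 := by
    intro j
    by_cases hj : j = i₀
    · rw [hj, hζi₀]; simp
    · exact le_of_eq ((hroots j hj).2)
  -- |z i₀| ≤ s
  have hz0 : ‖z i₀‖ ≤ s := by
    have := hs i₀
    rwa [hζi₀, Complex.dist_eq, sub_zero] at this
  ---------------------------------------------------------------
  -- Bound for the central root z i₀
  ---------------------------------------------------------------
  have central : critDist q (z i₀) ≤ r + 3 * s^2 := by
    -- q'(z i₀) = ∏_{j ≠ i₀} (z i₀ - z j)
    have hqsplit : q = (X - C (z i₀)) * ∏ j ∈ Finset.univ.erase i₀, (X - C (z j)) := by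
      rw [hq, ← Finset.mul_prod_erase Finset.univ _ (Finset.mem_univ i₀)]
    have hq'eval : (derivative q).eval (z i₀)
        = ∏ j ∈ Finset.univ.erase i₀, (z i₀ - z j) := by
      rw [hqsplit, derivative_mul, derivative_sub, derivative_X, derivative_C, sub_zero,
        one_mul, eval_add, eval_mul, eval_sub, eval_X, eval_C, sub_self, zero_mul, add_zero,
        eval_prod]
      apply Finset.prod_congr rfl; intro j _; simp
    -- bound |q'(z i₀)|² ≤ exp(3(n-1)s²)
    have hprodsq : ‖(derivative q).eval (z i₀)‖ ^ 2
        ≤ Real.exp (3 * (n-1) * s^2) := by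
      rw [hq'eval, norm_prod]
      rw [← Finset.prod_pow]
      have hterm : ∀ j ∈ Finset.univ.erase i₀,
          ‖z i₀ - z j‖ ^ 2 ≤ Real.exp (s^2 - 2 * (z i₀ * (starRingEnd ℂ) (z j)).re) := by
        intro j _
        have hns : ‖z i₀ - z j‖ ^ 2 = Complex.normSq (z i₀ - z j) := Complex.sq_norm _
        have hexp : Complex.normSq (z i₀ - z j)
            = Complex.normSq (z i₀) + Complex.normSq (z j)
              - 2 * (z i₀ * (starRingEnd ℂ) (z j)).re := Complex.normSq_sub _ _
        have hb1 : Complex.normSq (z i₀) ≤ s^2 := by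
          rw [← Complex.sq_norm]
          exact pow_le_pow_left₀ (norm_nonneg _) hz0 2
        have hb2 : Complex.normSq (z j) ≤ 1 := by
          rw [← Complex.sq_norm]
          nlinarith [hzabs j, norm_nonneg (z j)]
        have : ‖z i₀ - z j‖ ^ 2 ≤ 1 + (s^2 - 2 * (z i₀ * (starRingEnd ℂ) (z j)).re) := by
          rw [hns, hexp]; linarith
        refine this.trans ?_
        linarith [Real.add_one_le_exp (s^2 - 2 * (z i₀ * (starRingEnd ℂ) (z j)).re)]
      refine (Finset.prod_le_prod (fun j _ => by positivity) hterm).trans ?_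
      rw [← Real.exp_sum]
      apply Real.exp_le_exp.mpr
      -- sum of exponents
      have hsplit : ∑ j ∈ Finset.univ.erase i₀, (s^2 - 2 * (z i₀ * (starRingEnd ℂ) (z j)).re)
          = (n-1 : ℕ) * s^2 - 2 * (z i₀ * (starRingEnd ℂ) (∑ j ∈ Finset.univ.erase i₀, z j)).re := by
        rw [Finset.sum_sub_distrib, Finset.sum_const, hcard, nsmul_eq_mul]
        congr 1
        have hmc : z i₀ * (starRingEnd ℂ) (∑ j ∈ Finset.univ.erase i₀, z j)
            = ∑ j ∈ Finset.univ.erase i₀, z i₀ * (starRingEnd ℂ) (z j) := by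
          rw [map_sum, Finset.mul_sum]
        rw [hmc, Complex.re_sum, ← Finset.mul_sum]
      rw [hsplit]
      -- |Σ z j| ≤ (n-1) s  since Σ ζ j = 0
      have hS : ‖∑ j ∈ Finset.univ.erase i₀, z j‖ ≤ (n-1:ℕ) * s := by
        have : ∑ j ∈ Finset.univ.erase i₀, z j
            = ∑ j ∈ Finset.univ.erase i₀, (z j - ζ j) := by
          rw [Finset.sum_sub_distrib, hsum, sub_zero]
        rw [this]
        refine (norm_sum_le _ _).trans ?_
        have : ∀ j ∈ Finset.univ.erase i₀, ‖z j - ζ j‖ ≤ s := by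
          intro j _
          rw [← Complex.dist_eq]; exact hs j
        refine (Finset.sum_le_sum this).trans ?_
        rw [Finset.sum_const, hcard, nsmul_eq_mul]
      have hre : - (z i₀ * (starRingEnd ℂ) (∑ j ∈ Finset.univ.erase i₀, z j)).re
          ≤ (n-1:ℕ) * s^2 := by
        have h4 := Complex.abs_re_le_norm (z i₀ * (starRingEnd ℂ) (∑ j ∈ Finset.univ.erase i₀, z j))
        rw [norm_mul, Complex.norm_conj] at h4
        have h5 : ‖z i₀‖ * ‖∑ j ∈ Finset.univ.erase i₀, z j‖
            ≤ s * ((n-1:ℕ) * s) := by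
          apply mul_le_mul hz0 hS (norm_nonneg _) hs0
        have h6 := neg_abs_le ((z i₀ * (starRingEnd ℂ)
          (∑ j ∈ Finset.univ.erase i₀, z j)).re)
        nlinarith [h4.trans h5]
      rw [hcast] at hre ⊢
      nlinarith
    have hq'bound : ‖(derivative q).eval (z i₀)‖
        ≤ (n:ℝ) * (r * Real.exp (3/2 * s^2)) ^ (n-1) := by
      have hE : ((n:ℝ) * (r * Real.exp (3/2 * s^2)) ^ (n-1)) = Real.exp (3/2 * (n-1) * s^2) := by
        rw [mul_pow, sendR_pow n hn, ← Real.exp_nat_mul]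
        rw [← mul_assoc]
        rw [mul_inv_cancel₀ (show (n:ℝ) ≠ 0 by positivity), one_mul]
        congr 1
        rw [hcast]; ring
      rw [hE]
      have h6 : Real.exp (3/2 * (n-1) * s^2) ^ 2 = Real.exp (3 * (n-1) * s^2) := by
        rw [← Real.exp_nat_mul]; congr 1; push_cast; ring
      nlinarith [norm_nonneg ((derivative q).eval (z i₀)),
        Real.exp_pos (3/2 * (n-1) * s^2), hprodsq]
    obtain ⟨w, hw, hdw⟩ := aux_exists_crit_near n hn q hmon hdeg (z i₀)
      (r * Real.exp (3/2 * s^2)) (by positivity) hq'bound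
    refine (critDist_le q (z i₀) w hw).trans (hdw.trans ?_)
    -- r * exp(3/2 s²) ≤ r + 3 s²
    have hxle : (3:ℝ)/2 * s^2 ≤ 1 := by nlinarith
    have hxpos : (0:ℝ) ≤ 3/2 * s^2 := by positivity
    have habs : |(3:ℝ)/2 * s^2| ≤ 1 := by rw [_root_.abs_of_nonneg hxpos]; exact hxle
    have h8 := (abs_le.mp (Real.abs_exp_sub_one_le habs)).2
    rw [_root_.abs_of_nonneg hxpos] at h8
    nlinarith [Real.exp_pos ((3:ℝ)/2 * s^2), sq_nonneg s]
  ---------------------------------------------------------------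
  -- Bound for boundary roots
  ---------------------------------------------------------------
  have boundary : ∀ i, i ≠ i₀ → critDist q (z i) ≤ r := by
    intro i hi
    set x : ℂ := ((r:ℝ):ℂ) * ζ i with hxdef
    -- p'(x) = 0
    have hpx : (derivative (X ^ n + C c * X : ℂ[X])).eval x = 0 :=
      P_crit_rzeta n hn c hc (ζ i) (hroots i hi).1
    -- |q'(x)| ≤ K s
    have hq'x : ‖(derivative q).eval x‖ ≤ ((n:ℝ)^2 * 2^(n-1)) * s := by
      have hqx := aux_deriv_prod_eval n z x
      have hpx2 := aux_deriv_prod_eval n ζ x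
      rw [← hq] at hqx
      rw [← hP] at hpx2
      rw [hpx] at hpx2
      have hdiff : (derivative q).eval x
          = ∑ k, (∏ j ∈ Finset.univ.erase k, (x - z j) - ∏ j ∈ Finset.univ.erase k, (x - ζ j)) := by
        rw [Finset.sum_sub_distrib, hqx, ← hpx2, sub_zero]
      rw [hdiff]
      refine (norm_sum_le _ _).trans ?_
      have hxabs : ‖x‖ ≤ 1 := by
        rw [hxdef, norm_mul, Complex.norm_real, Real.norm_eq_abs, _root_.abs_of_nonneg (le_of_lt hr0)]
        calc r * ‖ζ i‖ ≤ 1 * 1 :=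
          mul_le_mul hr1 (hζabs i) (norm_nonneg _) zero_le_one
        _ = 1 := one_mul 1
      have hterm : ∀ k,
          ‖∏ j ∈ Finset.univ.erase k, (x - z j) - ∏ j ∈ Finset.univ.erase k, (x - ζ j)‖
          ≤ ((n-1:ℕ) * s) * 2^(n-1) := by
        intro k
        have := aux_prod_sub_prod (Finset.univ.erase k) (fun j => x - z j) (fun j => x - ζ j) 2
          (by norm_num)
          (fun j _ => by
            calc ‖x - z j‖ ≤ ‖x‖ + ‖z j‖ := by
                  exact (norm_sub_le _ _)
            _ ≤ 2 := by linarith [hzabs j])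
          (fun j _ => by
            calc ‖x - ζ j‖ ≤ ‖x‖ + ‖ζ j‖ := by
                  exact (norm_sub_le _ _)
            _ ≤ 2 := by linarith [hζabs j])
        refine this.trans ?_
        have hcard' : (Finset.univ.erase k).card = n - 1 := by
          rw [Finset.card_erase_of_mem (Finset.mem_univ k), Finset.card_univ, Fintype.card_fin]
        rw [hcard']
        apply mul_le_mul_of_nonneg_right _ (by positivity)
        have : ∀ j ∈ Finset.univ.erase k, ‖x - z j - (x - ζ j)‖ ≤ s := by
          intro j _
          have : x - z j - (x - ζ j) = ζ j - z j := by ring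
          rw [this, ← Complex.dist_eq, dist_comm]
          exact hs j
        refine (Finset.sum_le_sum this).trans ?_
        rw [Finset.sum_const, hcard', nsmul_eq_mul]
      refine (Finset.sum_le_sum (fun k _ => hterm k)).trans ?_
      rw [Finset.sum_const, Finset.card_univ, Fintype.card_fin, nsmul_eq_mul, hcast]
      have hn2 : (1:ℝ) ≤ n := by exact_mod_cast Nat.one_le_cast.mpr (by omega)
      have h9 : (0:ℝ) ≤ (2:ℝ)^(n-1) := by positivity
      have h11 : (0:ℝ) ≤ (n:ℝ) * s * 2^(n-1) :=
        mul_nonneg (mul_nonneg (by linarith) hs0) h9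
      nlinarith [mul_le_mul_of_nonneg_right (show ((n:ℝ) - 1) ≤ (n:ℝ) by linarith) h11]
    -- find critical point near x
    set B : ℝ := (((n:ℝ)^2 * 2^(n-1)) * s / n) ^ ((((n-1:ℕ)):ℝ))⁻¹ with hBdef
    have hKs0 : 0 ≤ ((n:ℝ)^2 * 2^(n-1)) * s / n := by positivity
    have hBpow : (n:ℝ) * B ^ (n-1) = ((n:ℝ)^2 * 2^(n-1)) * s := by
      rw [hBdef, ← Real.rpow_natCast ((((n:ℝ)^2 * 2^(n-1)) * s / n) ^ ((((n-1:ℕ)):ℝ))⁻¹) (n-1),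
        ← Real.rpow_mul hKs0,
        inv_mul_cancel₀ (show (((n-1:ℕ)):ℝ) ≠ 0 by exact_mod_cast (show n-1 ≠ 0 by omega)),
        Real.rpow_one]
      field_simp
    have hB0 : 0 ≤ B := Real.rpow_nonneg hKs0 _
    obtain ⟨w, hw, hdw⟩ := aux_exists_crit_near n hn q hmon hdeg x B hB0 (by rw [hBpow]; exact hq'x)
    -- B ≤ r - 1/2
    have hBle : B ≤ r - 1/2 := by
      have hg0 : 0 ≤ r - 1/2 := by linarith
      have : ((n:ℝ)^2 * 2^(n-1)) * s / n ≤ (r - 1/2)^(n-1) := h3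
      calc B ≤ ((r - 1/2)^(n-1) : ℝ) ^ ((((n-1:ℕ)):ℝ))⁻¹ := by
            apply Real.rpow_le_rpow hKs0 this (by positivity)
        _ = r - 1/2 := by
            rw [← Real.rpow_natCast (r - 1/2) (n-1), ← Real.rpow_mul hg0,
              mul_inv_cancel₀ (show (((n-1:ℕ)):ℝ) ≠ 0 by exact_mod_cast (show n-1 ≠ 0 by omega)),
              Real.rpow_one]
    -- distance chain
    refine (critDist_le q (z i) w hw).trans ?_
    calc dist (z i) w ≤ dist (z i) (ζ i) + dist (ζ i) x + dist x w := dist_triangle4 _ _ _ _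
      _ ≤ s + (1 - r) + (r - 1/2) := by
          have hd2 : dist (ζ i) x = 1 - r := by
            rw [hxdef, Complex.dist_eq]
            have : ζ i - ((r:ℝ):ℂ) * ζ i = ((1 - r : ℝ):ℂ) * ζ i := by push_cast; ring
            rw [this, norm_mul, Complex.norm_real, Real.norm_eq_abs, (hroots i hi).2, mul_one,
              _root_.abs_of_nonneg (by linarith)]
          rw [hd2]
          exact add_le_add (add_le_add (hs i) (le_refl _)) (hdw.trans hBle)
      _ ≤ r := by linarith
  ---------------------------------------------------------------
  -- conclude
  ---------------------------------------------------------------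
  apply Real.sSup_le
  · rintro a ⟨z', hz', rfl⟩
    have : ∃ i, z' = z i := by
      rw [hq, eval_prod] at hz'
      obtain ⟨i, -, hi⟩ := Finset.prod_eq_zero_iff.mp hz'
      simp only [eval_sub, eval_X, eval_C, sub_eq_zero] at hi
      exact ⟨i, hi⟩
    obtain ⟨i, rfl⟩ := this
    by_cases hii : i = i₀
    · rw [hii]
      refine central.trans ?_
      nlinarith
    · refine (boundary i hii).trans ?_
      nlinarith
  · nlinarith

/-- For `θ ∈ ℝ`, `n ≥ 3` and `p(z) = zⁿ + e^{iθ} z`: `|p|₀ = d(p)`,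
`|p|_ζ < d(p)` for every zero `ζ ≠ 0` of `p`, and `p` is linearly inextensible. -/
theorem stmt_12 (θ : ℝ) (n : ℕ) (hn : 3 ≤ n) (p : Polynomial ℂ)
    (hp : p = X ^ n + C (Complex.exp (θ * Complex.I)) * X) :
    critDist p 0 = sendovD p ∧
    (∀ ζ : ℂ, p.eval ζ = 0 → ζ ≠ 0 → critDist p ζ < sendovD p) ∧
    LinInext n p := by
  set c : ℂ := Complex.exp (θ * Complex.I) with hcdef
  have hc : ‖c‖ = 1 := Complex.norm_exp_ofReal_mul_I θ
  subst hp
  have hr0 := sendR_pos n hn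
  have hr1 := sendR_le_one n hn
  have hrh := sendR_gt_half n hn
  have hsend := P_sendovD n hn c hc
  refine ⟨?_, ?_, ?_⟩
  · rw [P_critDist_zero n hn c hc, hsend]
  · intro ζ hζ h0
    rw [hsend]
    exact lt_of_le_of_lt (P_critDist_root_le n hn c hc ζ hζ h0) (by linarith)
  · -- linear inextensibility
    set g : ℝ := sendR n - 1/2 with hgdef
    have hg0 : 0 < g := by simp only [hgdef]; linarith
    set K : ℝ := (n:ℝ)^2 * 2^(n-1) with hKdef
    have hK0 : 0 < K := by positivity
    have hn0 : (0:ℝ) < n := by positivity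
    set ε : ℝ := min (1/2) (min g ((n:ℝ) * g^(n-1) / K)) with hεdef
    have hε0 : 0 < ε := by
      apply lt_min (by norm_num)
      exact lt_min hg0 (by positivity)
    refine ⟨ε, hε0, 6, by norm_num, 1, one_pos, ?_⟩
    intro q hqS hΔ
    -- the defining set
    set S : Set ℝ := {r : ℝ | ∃ z ζ : Fin n → ℂ,
      q = ∏ i, (Polynomial.X - Polynomial.C (z i)) ∧
      (X ^ n + C c * X : ℂ[X]) = ∏ i, (Polynomial.X - Polynomial.C (ζ i)) ∧
      r = sSup (Set.range fun i => dist (z i) (ζ i))} with hSdef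
    have hΔS : polyDelta n q (X ^ n + C c * X) = sInf S := rfl
    -- p's representation
    have hpmon : (X ^ n + C c * X : ℂ[X]).Monic := by
      apply monic_X_pow_add
      calc degree (C c * X : ℂ[X]) ≤ 1 := by
            apply (degree_mul_le _ _).trans
            calc degree (C c : ℂ[X]) + degree (X : ℂ[X]) ≤ 0 + 1 :=
              add_le_add degree_C_le (le_of_eq (degree_X))
            _ = 1 := by norm_num
        _ < n := by exact_mod_cast (show (1:ℕ) < n by omega)
    have hpdeg : (X ^ n + C c * X : ℂ[X]).natDegree = n := by
      have h1 : degree (C c * X : ℂ[X]) < degree (X ^ n : ℂ[X]) := by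
        rw [degree_X_pow]
        apply lt_of_le_of_lt (degree_mul_le _ _)
        calc degree (C c : ℂ[X]) + degree (X : ℂ[X]) ≤ 0 + 1 :=
              add_le_add degree_C_le (le_of_eq (degree_X))
          _ = 1 := by norm_num
          _ < n := by exact_mod_cast (show (1:ℕ) < n by omega)
      have hdeg : degree (X ^ n + C c * X : ℂ[X]) = n := by
        rw [degree_add_eq_left_of_degree_lt h1, degree_X_pow]
      exact natDegree_eq_of_degree_eq_some hdeg
    obtain ⟨ζp, hζp⟩ := aux_exists_fin_prod n _ hpmon hpdeg
    obtain ⟨zq, hzq⟩ := aux_exists_fin_prod n q hqS.1 hqS.2.1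
    have hSne : S.Nonempty := ⟨_, zq, ζp, hzq, hζp, rfl⟩
    have hS0 : ∀ x ∈ S, 0 ≤ x := by
      rintro x ⟨z, ζ', h1, h2, rfl⟩
      have hd : (0:ℝ) ≤ dist (z ⟨0, by omega⟩) (ζ' ⟨0, by omega⟩) := dist_nonneg
      exact hd.trans (le_csSup ((Set.finite_range _).bddAbove) ⟨_, rfl⟩)
    have hΔ0 : 0 ≤ sInf S := Real.sInf_nonneg hS0
    rw [hΔS] at hΔ
    have key : ∀ s' ∈ S, s' < ε → sendovD q ≤ sendR n + 6 * s'^2 := by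
      rintro s' ⟨z, ζ', h1, h2, hr⟩ hlt
      have hs : ∀ i, dist (z i) (ζ' i) ≤ s' := by
        intro i; rw [hr]; exact le_csSup ((Set.finite_range _).bddAbove) ⟨i, rfl⟩
      have hs0 : 0 ≤ s' := le_trans dist_nonneg (hs ⟨0, by omega⟩)
      apply aux_main_bound n hn c hc q hqS z ζ' h1 h2 s' hs hs0
      · exact le_of_lt (lt_of_lt_of_le hlt (min_le_left _ _))
      · exact le_of_lt (lt_of_lt_of_le hlt ((min_le_right _ _).trans (min_le_left _ _)))
      · have h4 : s' < (n:ℝ) * g^(n-1) / K :=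
          lt_of_lt_of_le hlt ((min_le_right _ _).trans (min_le_right _ _))
        rw [lt_div_iff₀ hK0] at h4
        rw [div_le_iff₀ hn0]
        nlinarith
    have hgoal : sendovD q ≤ sendR n + 6 * (sInf S)^2 := by
      by_contra hcon
      push_neg at hcon
      set T := sendovD q - sendR n with hTdef
      have hT : 6 * (sInf S)^2 < T := by rw [hTdef]; linarith
      have hT0 : 0 < T := lt_of_le_of_lt (by positivity) hT
      set L := min ε (Real.sqrt (T/6)) with hLdef
      have hLS : ∀ s' ∈ S, L ≤ s' := by
        intro s' hs'
        rcases lt_or_ge s' ε with h | h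
        · have hb := key s' hs' h
          have hs0' : 0 ≤ s' := hS0 s' hs'
          have h5 : T ≤ 6 * s'^2 := by rw [hTdef]; linarith
          have h6 : T/6 ≤ s'^2 := by linarith
          calc L ≤ Real.sqrt (T/6) := min_le_right _ _
            _ ≤ Real.sqrt (s'^2) := Real.sqrt_le_sqrt h6
            _ = s' := Real.sqrt_sq hs0'
        · exact (min_le_left _ _).trans h
      have hΔL : L ≤ sInf S := le_csInf hSne hLS
      have hΔsq : sInf S < Real.sqrt (T/6) := by
        have h7 : (sInf S)^2 < T/6 := by linarith
        calc sInf S = Real.sqrt ((sInf S)^2) := (Real.sqrt_sq hΔ0).symm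
          _ < Real.sqrt (T/6) := Real.sqrt_lt_sqrt (sq_nonneg _) h7
      have h8 : sInf S < L := lt_min hΔ hΔsq
      linarith
    rw [hsend, hΔS]
    have hpow : (sInf S) ^ ((1:ℝ) + 1) = (sInf S)^2 := by
      rw [show ((1:ℝ) + 1) = ((2:ℕ):ℝ) by norm_num, Real.rpow_natCast]
    rw [hpow]
    exact hgoal
end

section
/- For every θ ∈ ℝ, the polynomial p(z) = z^3 + e^{iθ} z is not locally maximal for Sendov's conjecture: for every ε > 0 there exists q ∈ S_3 with Δ(q,p) < ε and d(q) > d(p). (For instance, with θ = π, the polynomials q_t(z) = (z - it)(z^2 - 1) satisfy d(q_t) = √((1+t^2)/3) > d(z^3 - z) = 1/√3 for all sufficiently small t > 0.) -/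
open Polynomial Complex

set_option maxHeartbeats 2000000 in
/-- For every `θ ∈ ℝ`, the polynomial `p(z) = z³ + e^{iθ} z` is not a local
maximum for Sendov's conjecture: for every `ε > 0` there is `q ∈ S₃` with `Δ(q,p) < ε`
and `d(q) > d(p)`. -/
theorem stmt_13 (θ : ℝ) (p : Polynomial ℂ)
    (hp : p = X ^ 3 + C (Complex.exp (θ * Complex.I)) * X) :
    ∀ ε > (0 : ℝ), ∃ q ∈ Sset 3, polyDelta 3 q p < ε ∧ sendovD p < sendovD q := by
  intro ε hε
  set a : ℂ := Complex.exp (θ * Complex.I) with ha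
  set u : ℂ := Complex.exp ((θ/2 : ℝ) * Complex.I) * Complex.I with hu
  have huAbs : ‖u‖ = 1 := by
    simp [hu, Complex.norm_exp]
  have hu2 : u ^ 2 = -a := by
    rw [hu, ha, mul_pow, sq, ← Complex.exp_add, Complex.I_sq]
    have : ((θ/2 : ℝ) : ℂ) * Complex.I + ((θ/2 : ℝ) : ℂ) * Complex.I = θ * Complex.I := by
      push_cast; ring
    rw [this]; ring
  clear_value a u
  -- parameters
  set t : ℝ := min (ε/2) (1/2) with hwt
  have ht0 : 0 < t := lt_min (by linarith) (by norm_num)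
  have ht1 : t ≤ 1/2 := min_le_right _ _
  have htε : t < ε := lt_of_le_of_lt (min_le_left _ _) (by linarith)
  clear_value t
  set s : ℂ := (t : ℂ) * Complex.I * u with hs
  have hsAbs : ‖s‖ = t := by
    simp [hs, huAbs, abs_of_pos ht0]
  clear_value s
  -- the perturbed polynomial
  set q : Polynomial ℂ := (X - C s) * ((X - C u) * (X - C (-u))) with hq
  clear_value q
  -- factorization of p
  have hfac2 : (X - C u) * (X - C (-u)) = X ^ 2 + C a := by
    have h : (X - C u) * (X - C (-u)) = X ^ 2 - C u ^ 2 := by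
      rw [map_neg]; ring
    rw [h, ← map_pow, hu2, map_neg, sub_neg_eq_add]
  have hpfact : p = X * ((X - C u) * (X - C (-u))) := by
    rw [hp, hfac2]; ring
  have hproots : ∀ z : ℂ, p.eval z = 0 ↔ (z = 0 ∨ z = u ∨ z = -u) := by
    intro z
    rw [hpfact]
    simp only [eval_mul, eval_sub, eval_X, eval_C, mul_eq_zero, sub_eq_zero]
  have hqroots : ∀ z : ℂ, q.eval z = 0 ↔ (z = s ∨ z = u ∨ z = -u) := by
    intro z
    rw [hq]
    simp only [eval_mul, eval_sub, eval_X, eval_C, mul_eq_zero, sub_eq_zero]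
  -- expanded form of q and its derivative
  have hqexp : q = X ^ 3 - C s * X ^ 2 + C a * X - C (s * a) := by
    rw [hq, hfac2, map_mul]; ring
  have hq' : derivative q = C 3 * X ^ 2 - C (2 * s) * X + C a := by
    rw [hqexp]
    simp only [derivative_sub, derivative_add, derivative_mul, derivative_C, derivative_X,
      derivative_X_pow]
    simp only [map_mul, Polynomial.C_eq_natCast]
    rw [map_ofNat C 3, map_ofNat C 2]
    push_cast
    ring
  -- critical points of q
  have h3t : (0:ℝ) ≤ 3 - t ^ 2 := by nlinarith
  set δ : ℂ := (Real.sqrt (3 - t ^ 2) : ℂ) * u with hδ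
  clear_value δ
  have hδAbs : ‖δ‖ = Real.sqrt (3 - t ^ 2) := by
    rw [hδ, norm_mul, huAbs, mul_one, Complex.norm_real, Real.norm_eq_abs,
      _root_.abs_of_nonneg (Real.sqrt_nonneg _)]
  have hδ2 : δ ^ 2 = s ^ 2 - 3 * a := by
    have r2 : ((Real.sqrt (3 - t ^ 2) : ℝ) : ℂ) ^ 2 = (3 : ℂ) - (t : ℂ) ^ 2 := by
      rw [← Complex.ofReal_pow, Real.sq_sqrt h3t]; push_cast; ring
    calc δ ^ 2 = ((3 : ℂ) - (t : ℂ) ^ 2) * u ^ 2 := by rw [hδ, mul_pow, r2]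
      _ = s ^ 2 - 3 * a := by
          rw [hs, mul_pow, mul_pow, Complex.I_sq, hu2]; ring
  set wp : ℂ := (s + δ) / 3 with hwp
  set wm : ℂ := (s - δ) / 3 with hwm
  clear_value wp wm
  have hfactq : derivative q = C 3 * ((X - C wp) * (X - C wm)) := by
    rw [hq']
    have e1 : (2:ℂ) * s = 3 * (wp + wm) := by rw [hwp, hwm]; ring
    have e2 : a = 3 * (wp * wm) := by
      rw [hwp, hwm]
      field_simp
      linear_combination hδ2
    rw [e1, e2]
    simp only [map_mul, map_add]
    rw [map_ofNat C 3]
    ring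
  have hq'roots : ∀ w : ℂ, (derivative q).eval w = 0 ↔ (w = wp ∨ w = wm) := by
    intro w
    rw [hfactq]
    simp only [eval_mul, eval_sub, eval_X, eval_C, mul_eq_zero, sub_eq_zero]
    constructor
    · rintro (h | h | h)
      · exact absurd h (by norm_num)
      · exact Or.inl h
      · exact Or.inr h
    · rintro (h | h)
      · exact Or.inr (Or.inl h)
      · exact Or.inr (Or.inr h)
  -- distances from s to the critical points of q
  set c : ℝ := Real.sqrt (3 + 3 * t ^ 2) / 3 with hc
  clear_value c
  have hdsp : dist s wp = c := by
    have key : s - wp =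
        u * (((-Real.sqrt (3 - t ^ 2) : ℝ) : ℂ) + ((2 * t : ℝ) : ℂ) * Complex.I) / 3 := by
      rw [hwp, hs, hδ]; push_cast; ring
    rw [Complex.dist_eq, key, norm_div, norm_mul, huAbs, one_mul, Complex.norm_add_mul_I]
    have : (-Real.sqrt (3 - t ^ 2)) ^ 2 + (2 * t) ^ 2 = 3 + 3 * t ^ 2 := by
      rw [neg_sq, Real.sq_sqrt h3t]; ring
    rw [this, hc]
    norm_num
  have hdsm : dist s wm = c := by
    have key : s - wm =
        u * (((Real.sqrt (3 - t ^ 2) : ℝ) : ℂ) + ((2 * t : ℝ) : ℂ) * Complex.I) / 3 := by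
      rw [hwm, hs, hδ]; push_cast; ring
    rw [Complex.dist_eq, key, norm_div, norm_mul, huAbs, one_mul, Complex.norm_add_mul_I]
    have : (Real.sqrt (3 - t ^ 2)) ^ 2 + (2 * t) ^ 2 = 3 + 3 * t ^ 2 := by
      rw [Real.sq_sqrt h3t]; ring
    rw [this, hc]
    norm_num
  -- critDist of q at s equals c
  have hbddbQ : ∀ z : ℂ, BddBelow {r : ℝ | ∃ w : ℂ, (derivative q).eval w = 0 ∧ r = dist z w} :=
    fun z => ⟨0, by rintro r ⟨w, -, rfl⟩; exact dist_nonneg⟩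
  have hcrit_s : critDist q s = c := by
    have hset : {r : ℝ | ∃ w : ℂ, (derivative q).eval w = 0 ∧ r = dist s w} = {c} := by
      ext r
      simp only [Set.mem_setOf_eq, Set.mem_singleton_iff]
      constructor
      · rintro ⟨w, hw, rfl⟩
        rcases (hq'roots w).1 hw with rfl | rfl
        · exact hdsp
        · exact hdsm
      · rintro rfl
        exact ⟨wp, (hq'roots wp).2 (Or.inl rfl), hdsp.symm⟩
    rw [critDist, hset, csInf_singleton]
  -- |wp| ≤ 1 and roots of q are in the unit disk
  have hsqr3 : Real.sqrt (3 - t ^ 2) ≤ 2 := by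
    have h1 : Real.sqrt (3 - t ^ 2) ≤ Real.sqrt 4 := Real.sqrt_le_sqrt (by nlinarith)
    have h2 : Real.sqrt 4 = 2 := by
      rw [show (4 : ℝ) = 2 ^ 2 by norm_num, Real.sqrt_sq (by norm_num)]
    linarith
  have hwpAbs : ‖wp‖ ≤ 1 := by
    rw [hwp]
    rw [norm_div]
    have h1 : ‖s + δ‖ ≤ ‖s‖ + ‖δ‖ := norm_add_le _ _
    have h3 : ‖(3 : ℂ)‖ = 3 := by norm_num
    rw [h3]
    rw [div_le_one (by norm_num)]
    rw [hsAbs, hδAbs] at h1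
    linarith
  have hqrootAbs : ∀ z : ℂ, q.eval z = 0 → ‖z‖ ≤ 1 := by
    intro z hz
    rcases (hqroots z).1 hz with rfl | rfl | rfl
    · rw [hsAbs]; linarith
    · rw [huAbs]
    · rw [norm_neg, huAbs]
  -- sendovD q ≥ c
  have hbddQ : BddAbove {r : ℝ | ∃ z : ℂ, q.eval z = 0 ∧ r = critDist q z} := by
    refine ⟨3, ?_⟩
    rintro r ⟨z, hz, rfl⟩
    have h1 : critDist q z ≤ dist z wp :=
      csInf_le (hbddbQ z) ⟨wp, (hq'roots wp).2 (Or.inl rfl), rfl⟩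
    have h2 : dist z wp ≤ ‖z‖ + ‖wp‖ := by
      rw [Complex.dist_eq]
      exact norm_sub_le _ _
    have h3 := hqrootAbs z hz
    linarith
  have hcq : c ≤ sendovD q :=
    le_csSup hbddQ ⟨s, (hqroots s).2 (Or.inl rfl), hcrit_s.symm⟩
  -- p side: critical points ±v with v = u/√3
  set r3 : ℝ := Real.sqrt 3 with hr3def
  clear_value r3
  have hr3sq : r3 ^ 2 = 3 := by rw [hr3def]; exact Real.sq_sqrt (by norm_num)
  have hr3pos : 0 < r3 := by rw [hr3def]; exact Real.sqrt_pos.2 (by norm_num)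
  have hr3c : ((r3 : ℝ) : ℂ) ^ 2 = 3 := by
    rw [← Complex.ofReal_pow, hr3sq]; norm_num
  have hr3ne : ((r3 : ℝ) : ℂ) ≠ 0 := by
    simpa using Complex.ofReal_ne_zero.2 (ne_of_gt hr3pos)
  set v : ℂ := (↑r3)⁻¹ * u with hv
  clear_value v
  have hp' : derivative p = C 3 * X ^ 2 + C a := by
    rw [hp]
    simp only [derivative_add, derivative_mul, derivative_C, derivative_X, derivative_X_pow,
      Polynomial.C_eq_natCast]
    rw [map_ofNat C 3]
    push_cast
    ring
  have hv2 : (3 : ℂ) * v ^ 2 = -a := by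
    rw [hv, mul_pow, hu2, inv_pow, hr3c]
    field_simp
  have hp'roots2 : ∀ w : ℂ, (derivative p).eval w = 0 ↔ (3 : ℂ) * w ^ 2 + a = 0 := by
    intro w
    rw [hp']
    simp only [eval_add, eval_mul, eval_pow, eval_C, eval_X]
  have hvcrit : (derivative p).eval v = 0 := by
    rw [hp'roots2]; linear_combination hv2
  have hnvcrit : (derivative p).eval (-v) = 0 := by
    rw [hp'roots2]; linear_combination hv2
  have hvAbs : ‖v‖ = r3⁻¹ := by
    rw [hv, norm_mul, huAbs, mul_one, norm_inv, Complex.norm_real, Real.norm_eq_abs,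
      _root_.abs_of_nonneg hr3pos.le]
  have hr3inv_le : r3⁻¹ ≤ 1 := by
    rw [inv_le_one_iff₀]
    right
    nlinarith
  have hduv : dist u v = 1 - r3⁻¹ := by
    have key : u - v = ((1 - r3⁻¹ : ℝ) : ℂ) * u := by
      rw [hv]; push_cast; ring
    rw [Complex.dist_eq, key, norm_mul, huAbs, mul_one, Complex.norm_real, Real.norm_eq_abs,
      _root_.abs_of_nonneg (by linarith)]
  have hdnuv : dist (-u) (-v) = 1 - r3⁻¹ := by
    rw [dist_neg_neg, hduv]
  have hbddbP : ∀ z : ℂ, BddBelow {r : ℝ | ∃ w : ℂ, (derivative p).eval w = 0 ∧ r = dist z w} :=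
    fun z => ⟨0, by rintro r ⟨w, -, rfl⟩; exact dist_nonneg⟩
  have hr3half : (1 : ℝ) / 2 ≤ r3⁻¹ := by
    rw [le_inv_comm₀ (by norm_num) hr3pos]
    nlinarith
  have hsendp : sendovD p ≤ r3⁻¹ := by
    apply Real.sSup_le
    · rintro r ⟨z, hz, rfl⟩
      rcases (hproots z).1 hz with rfl | hzu | hznu
      · have h1 : critDist p 0 ≤ dist 0 v := csInf_le (hbddbP 0) ⟨v, hvcrit, rfl⟩
        have h2 : dist (0 : ℂ) v = r3⁻¹ := by
          rw [Complex.dist_eq, zero_sub, norm_neg, hvAbs]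
        linarith
      · rw [hzu]
        have h1 : critDist p u ≤ dist u v := csInf_le (hbddbP u) ⟨v, hvcrit, rfl⟩
        rw [hduv] at h1
        linarith
      · rw [hznu]
        have h1 : critDist p (-u) ≤ dist (-u) (-v) := csInf_le (hbddbP (-u)) ⟨-v, hnvcrit, rfl⟩
        rw [hdnuv] at h1
        linarith
    · positivity
  have hlt : r3⁻¹ < c := by
    have h1 : r3⁻¹ = r3 / 3 := by
      field_simp
      linear_combination -hr3sq
    have h2 : r3 < Real.sqrt (3 + 3 * t ^ 2) := by
      rw [hr3def]
      exact Real.sqrt_lt_sqrt (by norm_num) (by nlinarith)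
    rw [h1, hc]
    linarith
  have hmain : sendovD p < sendovD q := lt_of_le_of_lt hsendp (lt_of_lt_of_le hlt hcq)
  -- assemble
  have hqmonic : q.Monic := by
    rw [hq]
    exact (monic_X_sub_C s).mul ((monic_X_sub_C u).mul (monic_X_sub_C (-u)))
  have hqdeg : q.natDegree = 3 := by
    rw [hq, (monic_X_sub_C s).natDegree_mul ((monic_X_sub_C u).mul (monic_X_sub_C (-u))),
      (monic_X_sub_C u).natDegree_mul (monic_X_sub_C (-u)),
      natDegree_X_sub_C, natDegree_X_sub_C, natDegree_X_sub_C]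
  set zfun : Fin 3 → ℂ := ![s, u, -u] with hzfun
  set ζfun : Fin 3 → ℂ := ![0, u, -u] with hζfun
  have hqprod : q = ∏ i, (X - C (zfun i)) := by
    rw [Fin.prod_univ_three, hq, hzfun]
    simp only [Matrix.cons_val_zero, Matrix.cons_val_one, Matrix.head_cons,
      Matrix.cons_val_two, Matrix.tail_cons]
    ring
  have hpprod : p = ∏ i, (X - C (ζfun i)) := by
    rw [Fin.prod_univ_three, hpfact, hζfun]
    simp only [Matrix.cons_val_zero, Matrix.cons_val_one, Matrix.head_cons,
      Matrix.cons_val_two, Matrix.tail_cons, map_zero, sub_zero]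
    ring
  have hdelta : polyDelta 3 q p < ε := by
    set R : ℝ := sSup (Set.range fun i : Fin 3 => dist (zfun i) (ζfun i)) with hR
    have hmem : R ∈ {r : ℝ | ∃ z ζ : Fin 3 → ℂ,
        q = ∏ i, (X - C (z i)) ∧ p = ∏ i, (X - C (ζ i)) ∧
        r = sSup (Set.range fun i => dist (z i) (ζ i))} :=
      ⟨zfun, ζfun, hqprod, hpprod, rfl⟩
    have hbdd : BddBelow {r : ℝ | ∃ z ζ : Fin 3 → ℂ,
        q = ∏ i, (X - C (z i)) ∧ p = ∏ i, (X - C (ζ i)) ∧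
        r = sSup (Set.range fun i => dist (z i) (ζ i))} := by
      refine ⟨0, ?_⟩
      rintro r ⟨z, ζ, -, -, rfl⟩
      have h1 : dist (z 0) (ζ 0) ≤ sSup (Set.range fun i => dist (z i) (ζ i)) :=
        le_csSup (Set.finite_range _).bddAbove ⟨0, rfl⟩
      exact le_trans dist_nonneg h1
    have hRle : R ≤ t := by
      rw [hR]
      apply Real.sSup_le
      · rintro r ⟨i, rfl⟩
        fin_cases i <;>
          simp [hzfun, hζfun, Complex.dist_eq, hsAbs, ht0.le]
      · linarith
    have := csInf_le hbdd hmem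
    rw [polyDelta]
    calc sInf _ ≤ R := this
      _ ≤ t := hRle
      _ < ε := htε
  exact ⟨q, ⟨hqmonic, hqdeg, hqrootAbs⟩, hdelta, hmain⟩
end

section
/- For every integer n ≥ 5 one has sin(π/(2(n-1)))/sin(π/n) < (1/n)^{1/(n-1)}. -/
open Real

private lemma aux_rpow {s : ℝ} {n m : ℕ} (hs : 0 ≤ s) (hm : 0 < m) (hn : 0 < n)
    (h : s ^ m * n < 1) : s < ((1:ℝ)/n) ^ ((1:ℝ)/m) := by
  have hn' : (0:ℝ) < n := by exact_mod_cast hn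
  have h1 : s ^ m < 1 / n := by
    rw [lt_div_iff₀ hn']; linarith
  have h2 : ((s ^ m : ℝ)) ^ ((1:ℝ)/m) < ((1:ℝ)/n) ^ ((1:ℝ)/m) :=
    Real.rpow_lt_rpow (by positivity) h1 (by positivity)
  calc s = (s ^ m) ^ ((1:ℝ)/m) := by
        rw [← Real.rpow_natCast s m, ← Real.rpow_mul hs]
        rw [mul_one_div, div_self (by exact_mod_cast hm.ne' : ((m:ℝ)) ≠ 0), Real.rpow_one]
    _ < _ := h2

private lemma aux_ind : ∀ m : ℕ, 5 ≤ m → ((m:ℝ)+1) * (13/20:ℝ)^m < 1 := by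
  intro m hm
  induction m, hm using Nat.le_induction with
  | base => norm_num
  | succ k hk ih =>
    have hk' : (5:ℝ) ≤ k := by exact_mod_cast hk
    have hpos : (0:ℝ) < (13/20:ℝ)^k := by positivity
    push_cast
    rw [pow_succ]
    nlinarith [ih, hpos]

set_option maxHeartbeats 1000000 in
/-- For every integer `n ≥ 5`,
`sin(π/(2(n-1)))/sin(π/n) < (1/n)^{1/(n-1)}`. -/
theorem stmt_16 (n : ℕ) (hn : 5 ≤ n) :
    Real.sin (Real.pi / (2 * ((n : ℝ) - 1))) / Real.sin (Real.pi / n) <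
      ((1 : ℝ) / n) ^ ((1 : ℝ) / ((n : ℝ) - 1)) := by
  have hn0 : 0 < n := by omega
  set m : ℕ := n - 1 with hmdef
  have hmn : (n:ℝ) - 1 = (m:ℝ) := by
    have : n = m + 1 := by omega
    rw [this]; push_cast; ring
  have hm0 : 0 < m := by omega
  rw [hmn]
  have hN : (5:ℝ) ≤ n := by exact_mod_cast hn
  have hNpos : (0:ℝ) < n := by linarith
  have hMpos : (0:ℝ) < (m:ℝ) := by exact_mod_cast hm0
  have hargA : 0 < Real.pi / (2 * (m:ℝ)) := by positivity
  have hargB : 0 < Real.pi / n := by positivity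
  have hsinB : 0 < Real.sin (Real.pi / n) := by
    apply Real.sin_pos_of_pos_of_lt_pi hargB
    rw [div_lt_iff₀ hNpos]
    nlinarith [Real.pi_pos]
  have hsinA : 0 < Real.sin (Real.pi / (2 * (m:ℝ))) := by
    apply Real.sin_pos_of_pos_of_lt_pi hargA
    rw [div_lt_iff₀ (by positivity : (0:ℝ) < 2 * (m:ℝ))]
    nlinarith [Real.pi_pos, hMpos]
  set s : ℝ := Real.sin (Real.pi / (2 * (m:ℝ))) / Real.sin (Real.pi / n) with hs
  have hs0 : 0 ≤ s := le_of_lt (div_pos hsinA hsinB)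
  apply aux_rpow hs0 hm0 hn0
  -- need : s ^ m * n < 1
  rcases eq_or_lt_of_le hn with h5 | h6
  · -- n = 5
    have hn5 : n = 5 := h5.symm
    subst hn5
    have hm4 : m = 4 := rfl
    have hA : Real.sin (Real.pi / (2 * (m:ℝ))) = √(2 - √2) / 2 := by
      rw [hm4]; norm_num [Real.sin_pi_div_eight]
    have hA2 : Real.sin (Real.pi / (2 * (m:ℝ))) ^ 2 = (2 - √2) / 4 := by
      rw [hA, div_pow, Real.sq_sqrt (show (0:ℝ) ≤ 2 - √2 by
        nlinarith [Real.sq_sqrt (show (0:ℝ) ≤ 2 by norm_num), Real.sqrt_nonneg 2])]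
      norm_num
    have hB2 : Real.sin (Real.pi / ((5:ℕ):ℝ)) ^ 2 = (10 - 2 * √5) / 16 := by
      have h1 := Real.sin_sq_add_cos_sq (Real.pi / 5)
      have h2 : Real.cos (Real.pi / 5) = (1 + √5) / 4 := Real.cos_pi_div_five
      have h3 : (√5) ^ 2 = 5 := Real.sq_sqrt (by norm_num)
      push_cast
      nlinarith [h1, h2, h3]
    -- goal : s ^ m * 5 < 1 ; reduce to 5 * sinA^4 < sinB^4
    have hsB4 : (0:ℝ) < Real.sin (Real.pi / ((5:ℕ):ℝ)) ^ 4 := by positivity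
    have key : 5 * Real.sin (Real.pi / (2 * (m:ℝ))) ^ 4 <
        Real.sin (Real.pi / ((5:ℕ):ℝ)) ^ 4 := by
      have eA : Real.sin (Real.pi / (2 * (m:ℝ))) ^ 4 = ((2 - √2) / 4) ^ 2 := by
        rw [show (4:ℕ) = 2*2 from rfl, pow_mul, hA2]
      have eB : Real.sin (Real.pi / ((5:ℕ):ℝ)) ^ 4 = ((10 - 2 * √5) / 16) ^ 2 := by
        rw [show Real.sin (Real.pi / ((5:ℕ):ℝ)) ^ 4 = (Real.sin (Real.pi / ((5:ℕ):ℝ)) ^ 2) ^ 2 by ring, hB2]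
      rw [eA, eB]
      have ha : (√2) ^ 2 = 2 := Real.sq_sqrt (by norm_num)
      have hb : (√5) ^ 2 = 5 := Real.sq_sqrt (by norm_num)
      have ha0 : 0 ≤ √2 := Real.sqrt_nonneg 2
      have hb0 : 0 ≤ √5 := Real.sqrt_nonneg 5
      -- reduces to 9 + √5 < 8√2
      have hb73 : √5 < 7/3 := by nlinarith [sq_nonneg (√5 - 7/3)]
      have hsq : (9 + √5) ^ 2 < (8 * √2) ^ 2 := by nlinarith [hb, ha]
      have hmain : 9 + √5 < 8 * √2 :=
        lt_of_pow_lt_pow_left₀ 2 (by positivity) hsq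
      nlinarith [ha, hb, hmain]
    rw [hm4, hs, div_pow]
    rw [div_mul_eq_mul_div, div_lt_one hsB4]
    push_cast
    linarith [key]
  · -- n ≥ 6
    have hN6 : (6:ℝ) ≤ n := by exact_mod_cast h6
    have hpiB : Real.pi / n ≤ 1 := by
      rw [div_le_one hNpos]
      nlinarith [Real.pi_lt_d2]
    have hlow : Real.pi / n - (Real.pi / n)^3 / 4 < Real.sin (Real.pi / n) :=
      lt_of_le_of_lt (by nlinarith [pow_pos hargB 3]) (Real.sin_gt_sub_cube hargB)
    have hup : Real.sin (Real.pi / (2 * (m:ℝ))) < Real.pi / (2 * (m:ℝ)) :=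
      Real.sin_lt hargA
    have hpi1 : Real.pi < 3.15 := Real.pi_lt_d2
    have hpi2 : 3.14 < Real.pi := by nlinarith [Real.pi_gt_d6]
    have hM5 : (5:ℝ) ≤ (m:ℝ) := by
      have : 5 ≤ m := by omega
      exact_mod_cast this
    have hkey : Real.pi / (2 * (m:ℝ)) ≤ (13/20) * (Real.pi / n - (Real.pi / n)^3 / 4) := by
      have e : Real.pi / (n:ℝ) - (Real.pi / n)^3 / 4
          = Real.pi * (4 * (n:ℝ)^2 - Real.pi^2) / (4 * (n:ℝ)^3) := by
        field_simp
      rw [e, div_le_iff₀ (by positivity : (0:ℝ) < 2 * (m:ℝ)),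
        show (13/20 : ℝ) * (Real.pi * (4 * (n:ℝ)^2 - Real.pi^2) / (4 * (n:ℝ)^3)) * (2 * (m:ℝ))
          = (13 * (Real.pi * (4 * (n:ℝ)^2 - Real.pi^2)) * (2 * (m:ℝ))) / (20 * (4 * (n:ℝ)^3))
          from by field_simp]
      rw [le_div_iff₀ (by positivity)]
      have hmN : (m:ℝ) = (n:ℝ) - 1 := hmn.symm
      rw [hmN]
      have hpisq : Real.pi ^ 2 < 10 := by nlinarith
      have h6' : (0:ℝ) ≤ (n:ℝ) - 6 := by linarith
      have key2 : 20 * (4 * (n:ℝ)^3) ≤ 13 * ((4 * (n:ℝ)^2 - Real.pi^2)) * (2 * ((n:ℝ) - 1)) := by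
        nlinarith [mul_nonneg (sub_nonneg.2 hpisq.le) (show (0:ℝ) ≤ (n:ℝ) - 1 by linarith),
          mul_nonneg (mul_nonneg h6' hNpos.le) hNpos.le,
          mul_nonneg h6' h6', mul_nonneg h6' hNpos.le]
      calc Real.pi * (20 * (4 * (n:ℝ)^3))
          ≤ Real.pi * (13 * ((4 * (n:ℝ)^2 - Real.pi^2)) * (2 * ((n:ℝ) - 1))) :=
            mul_le_mul_of_nonneg_left key2 Real.pi_pos.le
        _ = 13 * (Real.pi * (4 * (n:ℝ)^2 - Real.pi^2)) * (2 * ((n:ℝ) - 1)) := by ring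
    have hslt : s < 13/20 := by
      rw [hs, div_lt_iff₀ hsinB]
      calc Real.sin (Real.pi / (2 * (m:ℝ))) < Real.pi / (2 * (m:ℝ)) := hup
        _ ≤ (13/20) * (Real.pi / n - (Real.pi / n)^3 / 4) := hkey
        _ < 13/20 * Real.sin (Real.pi / n) := by nlinarith [hlow]
    have hpow : s ^ m < (13/20:ℝ)^m := pow_lt_pow_left₀ hslt hs0 hm0.ne'
    have hind := aux_ind m (by omega)
    have hnm : (n:ℝ) = (m:ℝ) + 1 := by rw [← hmn]; ring
    calc s ^ m * n < (13/20:ℝ)^m * n := mul_lt_mul_of_pos_right hpow hNpos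
      _ = ((m:ℝ)+1) * (13/20:ℝ)^m := by rw [hnm]; ring
      _ < 1 := hind
end
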